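/- For real r > −1 and real p, σ, ℏ > 0, the Gaussian integral (σ/(ℏ√π)) ∫_{−∞}^{∞} |k|^r e^{−(σ/ℏ)²(k−p)²} dk equals (Γ((r+1)/2)/√π) · (ℏ/σ)^r · ₁F₁(−r/2, 1/2, −(σp/ℏ)²). -/

import Mathlib

open Finset

/-- Kummer's confluent hypergeometric function of the first kind (real version),
defined by its everywhere-convergent power series. -/
noncomputable def kummerM (a b z : ℝ) : ℝ :=
  ∑' n : ℕ, ((∏ i ∈ Finset.range n, (a + (i : ℝ))) /
      ((∏ i ∈ Finset.range n, (b + (i : ℝ))) * (n.factorial : ℝ))) * z ^ n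

noncomputable def poch (a : ℝ) (n : ℕ) : ℝ := ∏ i ∈ Finset.range n, (a + (i : ℝ))

lemma poch_zero (a : ℝ) : poch a 0 = 1 := by simp [poch]

lemma poch_succ (a : ℝ) (n : ℕ) : poch a (n + 1) = poch a n * (a + n) :=
  Finset.prod_range_succ _ _

lemma poch_nonneg {a : ℝ} (ha : 0 ≤ a) (n : ℕ) : 0 ≤ poch a n :=
  Finset.prod_nonneg fun i _ => by positivity

lemma poch_succ' (a : ℝ) (n : ℕ) : poch a (n + 1) = a * poch (a + 1) n := by
  rw [poch, poch, Finset.prod_range_succ']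
  push_cast
  rw [add_zero, mul_comm]
  congr 1
  exact Finset.prod_congr rfl fun i _ => by ring

lemma poch_pos {a : ℝ} (ha : 0 < a) (n : ℕ) : 0 < poch a n :=
  Finset.prod_pos fun i _ => by positivity

lemma poch_ne_zero {b : ℝ} (hb : ∀ i : ℕ, b + (i : ℝ) ≠ 0) (n : ℕ) : poch b n ≠ 0 :=
  Finset.prod_ne_zero_iff.2 fun i _ => hb i

lemma fact_two_mul (n : ℕ) : ((2 * n).factorial : ℝ) = 4 ^ n * n.factorial * poch (1/2) n := by
  induction n with
  | zero => simp [poch]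
  | succ n ih =>
    have : 2 * (n + 1) = (2 * n + 1) + 1 := by ring
    rw [this, Nat.factorial_succ, Nat.factorial_succ, poch_succ, Nat.factorial_succ]
    push_cast
    rw [ih]
    push_cast
    ring

lemma Gamma_add_nat {a : ℝ} (ha : 0 < a) (n : ℕ) :
    Real.Gamma (a + n) = Real.Gamma a * poch a n := by
  induction n with
  | zero => simp [poch]
  | succ n ih =>
    have h : a + (n + 1 : ℕ) = (a + n) + 1 := by push_cast; ring
    rw [h, Real.Gamma_add_one (by positivity), ih, poch_succ]
    ring

lemma poch_le {a : ℝ} (ha : 0 ≤ a) (n : ℕ) :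
    poch a n ≤ (2 * (a + 1)) ^ n * poch (1/2) n := by
  induction n with
  | zero => simp [poch]
  | succ n ih =>
    rw [poch_succ, poch_succ, pow_succ]
    have h1 : (0:ℝ) ≤ a + n := by positivity
    have h2 : a + (n:ℝ) ≤ 2 * (a + 1) * (1/2 + n) := by nlinarith [Nat.cast_nonneg (α := ℝ) n]
    have h3 : (0:ℝ) ≤ poch a n := poch_nonneg ha n
    calc poch a n * (a + n) ≤ ((2 * (a + 1)) ^ n * poch (1/2) n) * (2 * (a + 1) * (1/2 + n)) := by
          exact mul_le_mul ih h2 h1 (mul_nonneg (by positivity) (poch_nonneg (by norm_num) n))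
      _ = (2 * (a + 1)) ^ n * (2 * (a + 1)) * (poch (1/2) n * (1/2 + n)) := by ring

lemma poch_step {a b : ℝ} (hb0 : b ≠ 0) (hbk : ∀ i : ℕ, b + (i : ℝ) ≠ 0) (k : ℕ) :
    poch a (k + 1) / poch b (k + 1)
      = poch a k / poch b k + (a - b) / b * (poch a k / poch (b + 1) k) := by
  have h1 : poch b (k + 1) = poch b k * (b + k) := poch_succ b k
  have h2 : poch b (k + 1) = b * poch (b + 1) k := poch_succ' b k
  have hbk' : b + (k : ℝ) ≠ 0 := hbk k
  have hpb : poch b k ≠ 0 := poch_ne_zero hbk k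
  have hpb1 : poch (b + 1) k ≠ 0 := by
    refine poch_ne_zero (fun i => ?_) k
    have := hbk (i + 1); push_cast at this; intro h; exact this (by linarith)
  have h3 : b * poch (b + 1) k = poch b k * (b + k) := by rw [← h2, h1]
  have hq : poch (b + 1) k = poch b k * (b + k) / b := by rw [← h3, mul_div_cancel_left₀ _ hb0]
  rw [poch_succ a k, h1, hq]
  field_simp
  ring

lemma vandermonde (a : ℝ) : ∀ (n : ℕ) (b : ℝ), (∀ i : ℕ, b + (i : ℝ) ≠ 0) →
    ∑ k ∈ Finset.range (n + 1), (-1 : ℝ) ^ k * (n.choose k : ℝ) * (poch a k / poch b k)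
      = poch (b - a) n / poch b n := by
  intro n
  induction n with
  | zero => intro b hb; simp [poch]
  | succ n ih =>
    intro b hb
    have hb0 : b ≠ 0 := by simpa using hb 0
    have hb1 : ∀ i : ℕ, (b + 1) + (i : ℝ) ≠ 0 := fun i => by
      have := hb (i + 1); push_cast at this; intro h; exact this (by linarith)
    have hpb1 : poch (b + 1) n ≠ 0 := poch_ne_zero hb1 n
    rw [Finset.sum_range_succ']
    have expand : ∀ i ∈ Finset.range (n + 1),
        (-1 : ℝ) ^ (i + 1) * (((n + 1).choose (i + 1) : ℕ) : ℝ) * (poch a (i+1) / poch b (i+1))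
          = (-((-1:ℝ)^i * (n.choose i : ℝ) * (poch a i / poch b i))
             - (a - b)/b * ((-1:ℝ)^i * (n.choose i : ℝ) * (poch a i / poch (b+1) i)))
            + (-1:ℝ)^(i+1) * (n.choose (i+1) : ℝ) * (poch a (i+1) / poch b (i+1)) := by
      intro i _
      rw [Nat.choose_succ_succ, poch_step hb0 hb i]
      push_cast
      ring
    rw [Finset.sum_congr rfl expand]
    rw [Finset.sum_add_distrib, Finset.sum_sub_distrib]
    have hF : (∑ i ∈ Finset.range (n + 1),
        (-1:ℝ)^(i+1) * (n.choose (i+1) : ℝ) * (poch a (i+1) / poch b (i+1)))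
        = (∑ k ∈ Finset.range (n + 1),
            (-1:ℝ)^k * (n.choose k : ℝ) * (poch a k / poch b k))
          + (-1:ℝ)^(n+1) * (n.choose (n+1) : ℝ) * (poch a (n+1) / poch b (n+1))
          - (-1:ℝ)^0 * (n.choose 0 : ℝ) * (poch a 0 / poch b 0) := by
      rw [← Finset.sum_range_succ
        (f := fun k => (-1:ℝ)^k * (n.choose k : ℝ) * (poch a k / poch b k)) (n := n + 1),
        Finset.sum_range_succ'
        (f := fun k => (-1:ℝ)^k * (n.choose k : ℝ) * (poch a k / poch b k)) (n := n + 1)]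
      ring
    rw [hF, ih b hb]
    have : ∑ i ∈ Finset.range (n + 1),
        (a - b)/b * ((-1:ℝ)^i * (n.choose i : ℝ) * (poch a i / poch (b+1) i))
        = (a - b)/b * (poch (b + 1 - a) n / poch (b + 1) n) := by
      rw [← Finset.mul_sum, ih (b+1) hb1]
    rw [Finset.sum_neg_distrib, this, ih b hb]
    rw [Nat.choose_succ_self, poch_succ' (b - a) n, poch_succ' b n]
    have hba : b - a + 1 = b + 1 - a := by ring
    rw [hba, poch_zero, poch_zero]
    push_cast
    field_simp
    simp only [Nat.choose_zero_right]
    ring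

lemma kummerM_eq (a b z : ℝ) :
    kummerM a b z = ∑' n : ℕ, poch a n / (poch b n * (n.factorial : ℝ)) * z ^ n := rfl

lemma half_add_ne (i : ℕ) : (1:ℝ)/2 + (i : ℝ) ≠ 0 := by positivity

lemma kummer_summable_norm {a : ℝ} (ha : 0 ≤ a) (z : ℝ) :
    Summable fun n : ℕ => ‖poch a n / (poch (1/2) n * (n.factorial : ℝ)) * z ^ n‖ := by
  refine Summable.of_nonneg_of_le (fun n => norm_nonneg _) (fun n => ?_)
    (Real.summable_pow_div_factorial (2 * (a + 1) * |z|))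
  have h3 : (0:ℝ) < poch (1/2) n := poch_pos (by norm_num) n
  have hfac : (0:ℝ) < (n.factorial : ℝ) := by exact_mod_cast n.factorial_pos
  rw [Real.norm_eq_abs, abs_mul, abs_div, abs_pow, abs_mul,
    abs_of_nonneg (poch_nonneg ha n), abs_of_nonneg h3.le, abs_of_nonneg hfac.le]
  calc poch a n / (poch (1/2) n * (n.factorial : ℝ)) * |z| ^ n
      ≤ ((2 * (a + 1)) ^ n * poch (1/2) n) / (poch (1/2) n * (n.factorial : ℝ)) * |z| ^ n := by
        gcongr
        exact poch_le ha n
    _ = (2 * (a + 1) * |z|) ^ n / (n.factorial : ℝ) := by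
        rw [mul_pow]
        rw [← div_div, mul_div_cancel_right₀ _ h3.ne', mul_pow, mul_pow]
        ring

lemma kummer_cauchy_coeff (a z : ℝ) (n : ℕ) :
    ∑ k ∈ Finset.range (n + 1),
      (poch a k / (poch (1/2) k * (k.factorial : ℝ)) * z ^ k) *
        ((-z) ^ (n - k) / (((n - k).factorial : ℝ)))
      = poch (1/2 - a) n / (poch (1/2) n * (n.factorial : ℝ)) * (-z) ^ n := by
  have hterm : ∀ k ∈ Finset.range (n + 1),
      (poch a k / (poch (1/2) k * (k.factorial : ℝ)) * z ^ k) *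
        ((-z) ^ (n - k) / (((n - k).factorial : ℝ)))
      = (-1:ℝ)^n * z^n / (n.factorial : ℝ)
          * ((-1:ℝ)^k * (n.choose k : ℝ) * (poch a k / poch (1/2) k)) := by
    intro k hk
    have hk' : k ≤ n := Nat.lt_succ_iff.mp (Finset.mem_range.mp hk)
    have e1 : ((n.factorial : ℝ)) = (n.choose k : ℝ) * (k.factorial : ℝ) * ((n-k).factorial : ℝ) := by
      exact_mod_cast (Nat.choose_mul_factorial_mul_factorial hk').symm
    have hzz : z ^ (n - k) * z ^ k = z ^ n := pow_sub_mul_pow z hk'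
    have h4 : ((-1:ℝ))^(n-k) * (-1)^k = (-1)^n := pow_sub_mul_pow (-1) hk'
    have hsq : ((-1:ℝ))^k * (-1)^k = 1 := by rw [← pow_add, ← two_mul, pow_mul]; norm_num
    have h5 : ((-1:ℝ))^(n-k) = (-1)^n * (-1)^k := by
      calc ((-1:ℝ))^(n-k) = (-1)^(n-k) * ((-1)^k * (-1)^k) := by rw [hsq, mul_one]
        _ = (-1)^n * (-1)^k := by rw [← mul_assoc, h4]
    have e1' : (1:ℝ)/((k.factorial : ℝ) * ((n-k).factorial : ℝ))
        = (n.choose k : ℝ) / (n.factorial : ℝ) := by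
      rw [div_eq_div_iff (by positivity) (by positivity)]
      linear_combination e1
    rw [neg_pow, h5]
    calc poch a k / (poch (1/2) k * (k.factorial:ℝ)) * z ^ k
          * ((-1:ℝ)^n * (-1)^k * z ^ (n-k) / ((n-k).factorial : ℝ))
        = poch a k / poch (1/2) k * ((-1:ℝ)^n * (-1)^k) * (z ^ (n-k) * z ^ k)
            * (1 / ((k.factorial:ℝ) * ((n-k).factorial : ℝ))) := by ring
      _ = poch a k / poch (1/2) k * ((-1:ℝ)^n * (-1)^k) * z ^ n
            * ((n.choose k : ℝ) / (n.factorial : ℝ)) := by rw [hzz, e1']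
      _ = (-1:ℝ)^n * z^n / (n.factorial : ℝ)
            * ((-1:ℝ)^k * (n.choose k : ℝ) * (poch a k / poch (1/2) k)) := by ring
  rw [Finset.sum_congr rfl hterm, ← Finset.mul_sum,
    vandermonde a n (1/2) half_add_ne, neg_pow z]
  ring

lemma kummer_transform {a : ℝ} (ha : 0 ≤ a) (z : ℝ) :
    kummerM a (1/2) z * Real.exp (-z) = kummerM (1/2 - a) (1/2) (-z) := by
  have hf := kummer_summable_norm ha z
  have hg : Summable fun m : ℕ => ‖(-z) ^ m / (m.factorial : ℝ)‖ := by
    refine (Real.summable_pow_div_factorial |z|).congr fun m => ?_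
    rw [Real.norm_eq_abs, abs_div, abs_pow, abs_neg, Nat.abs_cast]
  have hexp : Real.exp (-z) = ∑' m : ℕ, (-z) ^ m / (m.factorial : ℝ) := by
    rw [Real.exp_eq_exp_ℝ]
    exact (NormedSpace.expSeries_div_hasSum_exp (-z)).tsum_eq.symm
  rw [kummerM_eq, kummerM_eq, hexp,
    tsum_mul_tsum_eq_tsum_sum_range_of_summable_norm hf hg]
  exact tsum_congr fun n => kummer_cauchy_coeff a z n

open MeasureTheory Set in
lemma integrable_absRpow {b s : ℝ} (hb : 0 < b) (hs : -1 < s) :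
    Integrable (fun x : ℝ => |x| ^ s * Real.exp (-b * x ^ 2)) := by
  have hIoi : IntegrableOn (fun x : ℝ => |x| ^ s * Real.exp (-b * x ^ 2)) (Ioi 0) := by
    refine (integrableOn_rpow_mul_exp_neg_mul_sq hb hs).congr_fun ?_ measurableSet_Ioi
    intro x hx
    simp only [abs_of_pos (show (0:ℝ) < x from hx)]
  have hIic : IntegrableOn (fun x : ℝ => |x| ^ s * Real.exp (-b * x ^ 2)) (Iic 0) := by
    rw [← Measure.map_neg_eq_self (volume : Measure ℝ)]
    have m : MeasurableEmbedding fun x : ℝ => -x := (Homeomorph.neg ℝ).measurableEmbedding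
    rw [m.integrableOn_map_iff]
    simp_rw [Function.comp_def, abs_neg, neg_sq, neg_preimage, neg_Iic, neg_zero]
    exact Iff.mpr integrableOn_Ici_iff_integrableOn_Ioi hIoi
  rw [← integrableOn_univ, ← Iic_union_Ioi (a := (0:ℝ))]
  exact hIic.union hIoi

open MeasureTheory Set in
lemma integrable_f {r : ℝ} (hr : -1 < r) (q : ℝ) :
    Integrable (fun x : ℝ => |x| ^ r * Real.exp (-(x - q) ^ 2)) := by
  have hmeas : AEStronglyMeasurable (fun x : ℝ => |x| ^ r * Real.exp (-(x - q) ^ 2))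
      (volume : Measure ℝ) := by
    apply Measurable.aestronglyMeasurable
    fun_prop
  refine Integrable.mono' (((integrable_absRpow one_half_pos hr).const_mul
    (Real.exp (q ^ 2)))) hmeas ?_
  filter_upwards with x
  have h1 : Real.exp (-(x - q) ^ 2) ≤ Real.exp (q ^ 2) * Real.exp (-(1/2) * x ^ 2) := by
    rw [← Real.exp_add]
    apply Real.exp_le_exp.mpr
    nlinarith [sq_nonneg (x - 2 * q)]
  have h2 : (0:ℝ) ≤ |x| ^ r := Real.rpow_nonneg (abs_nonneg x) r
  rw [Real.norm_eq_abs, abs_mul, abs_of_nonneg h2, abs_of_nonneg (Real.exp_nonneg _)]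
  calc |x| ^ r * Real.exp (-(x - q) ^ 2)
      ≤ |x| ^ r * (Real.exp (q ^ 2) * Real.exp (-(1/2) * x ^ 2)) := by gcongr
    _ = Real.exp (q ^ 2) * (|x| ^ r * Real.exp (-(1/2) * x ^ 2)) := by ring

open MeasureTheory Set in
lemma symm_eq {r : ℝ} (hr : -1 < r) (q : ℝ) :
    ∫ x : ℝ, |x| ^ r * Real.exp (-(x - q) ^ 2)
      = 2 * ∫ t in Ioi (0:ℝ), t ^ r * Real.exp (-t ^ 2 - q ^ 2) * Real.cosh (2 * q * t) := by
  set f : ℝ → ℝ := fun x => |x| ^ r * Real.exp (-(x - q) ^ 2) with hf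
  have hint : Integrable f := integrable_f hr q
  have hintn : Integrable fun x => f (-x) := hint.comp_neg
  have hpt : ∀ x : ℝ, f x + f (-x)
      = 2 * (|x| ^ r * Real.exp (-|x| ^ 2 - q ^ 2) * Real.cosh (2 * q * |x|)) := by
    intro x
    have hc : Real.cosh (2 * q * |x|) = Real.cosh (2 * q * x) := by
      rcases abs_choice x with h | h <;> rw [h]
      rw [mul_neg, Real.cosh_neg]
    rw [hf]
    simp only
    rw [hc, Real.cosh_eq, abs_neg, sq_abs,
      show -(x - q) ^ 2 = (-x ^ 2 - q ^ 2) + 2 * q * x by ring,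
      show -(-x - q) ^ 2 = (-x ^ 2 - q ^ 2) + -(2 * q * x) by ring,
      Real.exp_add, Real.exp_add]
    ring
  have h2 : 2 * ∫ x, f x = ∫ x, (f x + f (-x)) := by
    rw [integral_add hint hintn, integral_neg_eq_self (f := f) (μ := volume)]
    ring
  have h3 : (∫ x, (f x + f (-x)))
      = 2 * ∫ x : ℝ, |x| ^ r * Real.exp (-|x| ^ 2 - q ^ 2) * Real.cosh (2 * q * |x|) := by
    rw [← integral_const_mul]
    exact integral_congr_ae (Filter.Eventually.of_forall hpt)
  have h4 : (∫ x : ℝ, |x| ^ r * Real.exp (-|x| ^ 2 - q ^ 2) * Real.cosh (2 * q * |x|))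
      = 2 * ∫ t in Ioi (0:ℝ), t ^ r * Real.exp (-t ^ 2 - q ^ 2) * Real.cosh (2 * q * t) :=
    integral_comp_abs (f := fun t => t ^ r * Real.exp (-t ^ 2 - q ^ 2) * Real.cosh (2 * q * t))
  have := h2.trans (h3.trans (congrArg (fun y => 2 * y) h4))
  linarith [this]

open MeasureTheory Set in
lemma integral_rpow_exp_neg_sq {s : ℝ} (hs : -1 < s) :
    ∫ t in Ioi (0:ℝ), t ^ s * Real.exp (-t ^ 2) = Real.Gamma ((s + 1) / 2) / 2 := by
  have h := integral_rpow_mul_exp_neg_rpow (p := 2) (q := s) (by norm_num) hs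
  rw [show (1:ℝ)/2 * Real.Gamma ((s+1)/2) = Real.Gamma ((s+1)/2)/2 by ring] at h
  rw [← h]
  refine setIntegral_congr_fun measurableSet_Ioi fun t ht => ?_
  have : t ^ (2:ℝ) = t ^ 2 := by
    rw [show (2:ℝ) = ((2:ℕ):ℝ) by norm_num, Real.rpow_natCast]
  simp only [this]

open MeasureTheory Set in
lemma term_integral {r : ℝ} (hr : -1 < r) (q : ℝ) (n : ℕ) :
    ∫ t in Ioi (0:ℝ), t ^ r * Real.exp (-t ^ 2) * ((2 * q * t) ^ (2 * n) / (((2 * n).factorial : ℝ)))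
      = (2 * q) ^ (2 * n) / (((2 * n).factorial : ℝ)) * (Real.Gamma ((r + 1) / 2 + n) / 2) := by
  have hcong : ∀ t ∈ Ioi (0:ℝ),
      t ^ r * Real.exp (-t ^ 2) * ((2 * q * t) ^ (2 * n) / (((2 * n).factorial : ℝ)))
      = (2 * q) ^ (2 * n) / (((2 * n).factorial : ℝ)) * (t ^ (r + 2 * n) * Real.exp (-t ^ 2)) := by
    intro t ht
    have ht' : (0:ℝ) < t := ht
    have h1 : t ^ (r + 2 * n) = t ^ r * t ^ (2 * n : ℕ) := by
      rw [← Real.rpow_natCast t (2 * n), ← Real.rpow_add ht']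
      push_cast
      ring_nf
    rw [h1, mul_pow]
    ring
  rw [setIntegral_congr_fun measurableSet_Ioi hcong, integral_const_mul,
    integral_rpow_exp_neg_sq (by push_cast; linarith)]
  have : (r + 2 * (n:ℝ) + 1) / 2 = (r + 1) / 2 + n := by ring
  rw [show (r + 2 * (n:ℕ) + 1) = (r + 2 * (n:ℝ) + 1) by push_cast; ring, this]

open MeasureTheory Set in
lemma term_integrable {r : ℝ} (hr : -1 < r) (q : ℝ) (n : ℕ) :
    IntegrableOn (fun t : ℝ =>
      t ^ r * Real.exp (-t ^ 2) * ((2 * q * t) ^ (2 * n) / (((2 * n).factorial : ℝ)))) (Ioi 0) := by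
  have base : IntegrableOn (fun t : ℝ => t ^ (r + 2 * n) * Real.exp (-(1:ℝ) * t ^ 2)) (Ioi 0) :=
    integrableOn_rpow_mul_exp_neg_mul_sq one_pos (by push_cast; linarith)
  have : IntegrableOn (fun t : ℝ =>
      (2 * q) ^ (2 * n) / (((2 * n).factorial : ℝ)) * (t ^ (r + 2 * n) * Real.exp (-(1:ℝ) * t ^ 2)))
      (Ioi 0) := base.const_mul _
  refine this.congr_fun ?_ measurableSet_Ioi
  intro t ht
  have ht' : (0:ℝ) < t := ht
  have h1 : t ^ (r + 2 * n) = t ^ r * t ^ (2 * n : ℕ) := by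
    rw [← Real.rpow_natCast t (2 * n), ← Real.rpow_add ht']
    push_cast
    ring_nf
  simp only [h1, mul_pow, neg_one_mul]
  ring

lemma Vn_eq {r : ℝ} (hr : -1 < r) (q : ℝ) (n : ℕ) :
    (2 * q) ^ (2 * n) / (((2 * n).factorial : ℝ)) * (Real.Gamma ((r + 1) / 2 + n) / 2)
      = Real.Gamma ((r + 1) / 2) / 2
        * (poch ((r + 1) / 2) n / (poch (1/2) n * (n.factorial : ℝ)) * (q ^ 2) ^ n) := by
  have ha : (0:ℝ) < (r + 1) / 2 := by linarith
  rw [Gamma_add_nat ha n, fact_two_mul n]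
  have h1 : (2 * q) ^ (2 * n) = 4 ^ n * (q ^ 2) ^ n := by
    rw [pow_mul]
    rw [show (2 * q) ^ 2 = 4 * q ^ 2 by ring, mul_pow]
  rw [h1]
  have h4 : (0:ℝ) < 4 ^ n := by positivity
  have hf : (0:ℝ) < (n.factorial : ℝ) := by exact_mod_cast n.factorial_pos
  have hp : (0:ℝ) < poch (1/2) n := poch_pos (by norm_num) n
  field_simp

lemma Vn_nonneg {r : ℝ} (hr : -1 < r) (q : ℝ) (n : ℕ) :
    0 ≤ (2 * q) ^ (2 * n) / (((2 * n).factorial : ℝ)) * (Real.Gamma ((r + 1) / 2 + n) / 2) := by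
  have hn : (0:ℝ) ≤ (n:ℝ) := Nat.cast_nonneg n
  have ha : (0:ℝ) < (r + 1) / 2 + n := by linarith
  have hg := Real.Gamma_pos_of_pos ha
  have hq : (0:ℝ) ≤ (2 * q) ^ (2 * n) := (even_two_mul n).pow_nonneg _
  have hf : (0:ℝ) < (((2 * n).factorial : ℝ)) := by exact_mod_cast (2 * n).factorial_pos
  exact mul_nonneg (div_nonneg hq hf.le) (by linarith)

lemma Vn_summable {r : ℝ} (hr : -1 < r) (q : ℝ) :
    Summable fun n : ℕ =>
      (2 * q) ^ (2 * n) / (((2 * n).factorial : ℝ)) * (Real.Gamma ((r + 1) / 2 + n) / 2) := by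
  have ha : (0:ℝ) ≤ (r + 1) / 2 := by linarith
  have hsum : Summable fun n : ℕ =>
      poch ((r + 1) / 2) n / (poch (1/2) n * (n.factorial : ℝ)) * (q ^ 2) ^ n :=
    (kummer_summable_norm ha (q ^ 2)).of_norm
  refine ((hsum.mul_left (Real.Gamma ((r + 1) / 2) / 2)).congr fun n => ?_)
  rw [Vn_eq hr q n]

open MeasureTheory Set in
lemma core {r : ℝ} (hr : -1 < r) (q : ℝ) :
    ∫ x : ℝ, |x| ^ r * Real.exp (-(x - q) ^ 2)
      = Real.Gamma ((r + 1) / 2) * Real.exp (-q ^ 2)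
          * kummerM ((r + 1) / 2) (1/2) (q ^ 2) := by
  rw [symm_eq hr q]
  set F : ℕ → ℝ → ℝ := fun n t =>
    t ^ r * Real.exp (-t ^ 2) * ((2 * q * t) ^ (2 * n) / (((2 * n).factorial : ℝ))) with hF
  have hFnn : ∀ (n : ℕ) (t : ℝ), t ∈ Ioi (0:ℝ) → 0 ≤ F n t := by
    intro n t ht
    have h1 : (0:ℝ) ≤ t ^ r := Real.rpow_nonneg (le_of_lt ht) r
    have h2 : (0:ℝ) ≤ (2 * q * t) ^ (2 * n) := (even_two_mul n).pow_nonneg _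
    have h3 : (0:ℝ) < (((2 * n).factorial : ℝ)) := by exact_mod_cast (2 * n).factorial_pos
    have := Real.exp_nonneg (-t ^ 2)
    positivity
  have hpt : ∀ t : ℝ, t ^ r * Real.exp (-t ^ 2 - q ^ 2) * Real.cosh (2 * q * t)
      = Real.exp (-q ^ 2) * ∑' n, F n t := by
    intro t
    have h1 : ∑' n, F n t
        = t ^ r * Real.exp (-t ^ 2) * ∑' n, (2 * q * t) ^ (2 * n) / (((2 * n).factorial : ℝ)) :=
      tsum_mul_left
    rw [h1, ← Real.cosh_eq_tsum (2 * q * t),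
      show -t ^ 2 - q ^ 2 = -t ^ 2 + -q ^ 2 by ring, Real.exp_add]
    ring
  have hcong : (∫ t in Ioi (0:ℝ), t ^ r * Real.exp (-t ^ 2 - q ^ 2) * Real.cosh (2 * q * t))
      = Real.exp (-q ^ 2) * ∫ t in Ioi (0:ℝ), ∑' n, F n t := by
    rw [← integral_const_mul]
    exact setIntegral_congr_fun measurableSet_Ioi fun t _ => hpt t
  rw [hcong]
  have hmeas : ∀ n, AEStronglyMeasurable (F n) (volume.restrict (Ioi (0:ℝ))) := by
    intro n
    apply Measurable.aestronglyMeasurable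
    fun_prop
  have h1 : ∀ n : ℕ, (∫⁻ t in Ioi (0:ℝ), ‖F n t‖₊)
      = ENNReal.ofReal (∫ t in Ioi (0:ℝ), F n t) := by
    intro n
    rw [ofReal_integral_eq_lintegral_ofReal (term_integrable hr q n)
      (by filter_upwards [ae_restrict_mem measurableSet_Ioi] with t ht using hFnn n t ht)]
    refine lintegral_congr_ae ?_
    filter_upwards [ae_restrict_mem measurableSet_Ioi] with t ht
    exact Real.enorm_eq_ofReal (hFnn n t ht)
  have hlint : (∑' n, ∫⁻ t in Ioi (0:ℝ), ‖F n t‖₊) ≠ ⊤ := by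
    rw [tsum_congr h1]
    have hnn : ∀ n : ℕ, 0 ≤ ∫ t in Ioi (0:ℝ), F n t := by
      intro n
      rw [term_integral hr q n]
      exact Vn_nonneg hr q n
    have hsummable : Summable fun n : ℕ => ∫ t in Ioi (0:ℝ), F n t := by
      refine ((Vn_summable hr q).congr fun n => ?_)
      rw [term_integral hr q n]
    rw [← ENNReal.ofReal_tsum_of_nonneg hnn hsummable]
    exact ENNReal.ofReal_ne_top
  rw [integral_tsum hmeas hlint]
  have h2 : (∑' n, ∫ t in Ioi (0:ℝ), F n t)
      = Real.Gamma ((r + 1) / 2) / 2 * kummerM ((r + 1) / 2) (1/2) (q ^ 2) := by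
    rw [kummerM_eq, ← tsum_mul_left]
    refine tsum_congr fun n => ?_
    rw [term_integral hr q n, Vn_eq hr q n]
  rw [h2]
  ring

/-- The Gaussian fractional-moment integral (expectation value of |p̂|^r in a
harmonic-oscillator coherent state) expressed via a Kummer function. -/
theorem gaussian_fractional_moment (r p σ ℏ : ℝ) (hr : -1 < r) (hσ : 0 < σ) (hℏ : 0 < ℏ) :
    (σ / (ℏ * Real.sqrt Real.pi)) *
      ∫ k : ℝ, |k| ^ r * Real.exp (-(σ / ℏ) ^ 2 * (k - p) ^ 2)
    = (Real.Gamma ((r + 1) / 2) / Real.sqrt Real.pi) * (ℏ / σ) ^ r *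
        kummerM (-r / 2) (1 / 2) (-(σ * p / ℏ) ^ 2) := by
  set c : ℝ := σ / ℏ with hc
  have hc0 : 0 < c := div_pos hσ hℏ
  set q : ℝ := σ * p / ℏ with hq
  have hq' : c * p = q := by rw [hc, hq]; ring
  have hsub : (∫ k : ℝ, |k| ^ r * Real.exp (-c ^ 2 * (k - p) ^ 2))
      = c⁻¹ * ((c⁻¹) ^ r * ∫ x : ℝ, |x| ^ r * Real.exp (-(x - q) ^ 2)) := by
    have h : (∫ x : ℝ, |c⁻¹ * x| ^ r * Real.exp (-c ^ 2 * (c⁻¹ * x - p) ^ 2))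
        = |c| • ∫ k : ℝ, |k| ^ r * Real.exp (-c ^ 2 * (k - p) ^ 2) :=
      MeasureTheory.Measure.integral_comp_inv_mul_left
        (fun k : ℝ => |k| ^ r * Real.exp (-c ^ 2 * (k - p) ^ 2)) c
    rw [abs_of_pos hc0, smul_eq_mul] at h
    have h2 : ∀ x : ℝ, |c⁻¹ * x| ^ r * Real.exp (-c ^ 2 * (c⁻¹ * x - p) ^ 2)
        = (c⁻¹) ^ r * (|x| ^ r * Real.exp (-(x - q) ^ 2)) := by
      intro x
      have e1 : |c⁻¹ * x| = c⁻¹ * |x| := by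
        rw [abs_mul, abs_of_pos (inv_pos.mpr hc0)]
      have e2 : (c⁻¹ * |x|) ^ r = (c⁻¹) ^ r * |x| ^ r :=
        Real.mul_rpow (le_of_lt (inv_pos.mpr hc0)) (abs_nonneg x)
      have e3 : -c ^ 2 * (c⁻¹ * x - p) ^ 2 = -(x - q) ^ 2 := by
        rw [← hq']
        field_simp
      rw [e1, e2, e3]
      ring
    calc (∫ k : ℝ, |k| ^ r * Real.exp (-c ^ 2 * (k - p) ^ 2))
        = c⁻¹ * ∫ x : ℝ, |c⁻¹ * x| ^ r * Real.exp (-c ^ 2 * (c⁻¹ * x - p) ^ 2) := by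
          rw [h, ← mul_assoc, inv_mul_cancel₀ (ne_of_gt hc0), one_mul]
      _ = c⁻¹ * ∫ x : ℝ, (c⁻¹) ^ r * (|x| ^ r * Real.exp (-(x - q) ^ 2)) := by
          congr 1
          exact MeasureTheory.integral_congr_ae (Filter.Eventually.of_forall h2)
      _ = c⁻¹ * ((c⁻¹) ^ r * ∫ x : ℝ, |x| ^ r * Real.exp (-(x - q) ^ 2)) := by
          rw [MeasureTheory.integral_const_mul]
  have htrans := kummer_transform (a := (r + 1) / 2) (by linarith) (q ^ 2)
  have hhalf : (1:ℝ)/2 - (r + 1)/2 = -r / 2 := by ring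
  rw [hhalf] at htrans
  have hσℏ : σ / (ℏ * Real.sqrt Real.pi) = c / Real.sqrt Real.pi := by
    rw [hc, div_div]
  have hinv : ℏ / σ = c⁻¹ := by rw [hc, inv_div]
  rw [hσℏ, hsub, core hr q, hinv, ← htrans]
  have hπ : Real.sqrt Real.pi ≠ 0 := by
    positivity
  field_simp
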